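/- Let X be a closed acausal subset of the pseudo-Euclidean space ℝ_{(l,p)} and let a ∈ X. If x ∈ N(a) and x ≠ a, then for every t ∈ [0,1) one has m(a + t(x−a)) = {a}, i.e. the half-open segment [a,x) is contained in N'(a); in particular, if x ∈ N'(a) then the closed segment [a,x] is contained in N'(a). -/
import Mathlib


open Filter Topology Set

noncomputable section

/-- The pseudo-Euclidean space `ℝ_{(l,p)}`: `ℝ^(l+p)` with the Euclidean topology. -/
abbrev PE (l p : ℕ) := EuclideanSpace ℝ (Fin (l + p))

/-- The quadratic form `Q(x) = ‖x‖_l² − ‖x‖_p²`. -/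
def Q (l p : ℕ) (x : PE l p) : ℝ :=
  ∑ i : Fin (l + p), if (i : ℕ) < l then (x i) ^ 2 else -((x i) ^ 2)

/-- The pseudo-scalar product `⟪x,y⟫ = Σ_{i<l} x_i y_i − Σ_{i≥l} x_i y_i`. -/
def pseudoInner (l p : ℕ) (x y : PE l p) : ℝ :=
  ∑ i : Fin (l + p), if (i : ℕ) < l then x i * y i else -(x i * y i)

/-- `‖x‖_l`: the Euclidean norm of the first `l` coordinates. -/
def normL (l p : ℕ) (x : PE l p) : ℝ :=
  Real.sqrt (∑ i : Fin (l + p), if (i : ℕ) < l then (x i) ^ 2 else 0)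

/-- `‖x‖_p`: the Euclidean norm of the last `p` coordinates. -/
def normP (l p : ℕ) (x : PE l p) : ℝ :=
  Real.sqrt (∑ i : Fin (l + p), if (i : ℕ) < l then 0 else (x i) ^ 2)

/-- `X` is acausal: `Q(x−y) > 0` for all distinct `x, y ∈ X`. -/
def Acausal (l p : ℕ) (X : Set (PE l p)) : Prop :=
  ∀ x ∈ X, ∀ y ∈ X, x ≠ y → 0 < Q l p (x - y)

/-- `X` is `L`-pseudo-Lipschitz: `L‖x−y‖_l ≥ ‖x−y‖_p` for all `x, y ∈ X`. -/
def PseudoLipschitz (l p : ℕ) (L : ℝ) (X : Set (PE l p)) : Prop :=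
  ∀ x ∈ X, ∀ y ∈ X, normP l p (x - y) ≤ L * normL l p (x - y)

/-- The squared-distance function `ρ(a,X) = inf {Q(x−a) : x ∈ X}`. -/
def rho (l p : ℕ) (X : Set (PE l p)) (a : PE l p) : ℝ :=
  sInf ((fun x => Q l p (x - a)) '' X)

/-- The set of closest points `m(a) = {x ∈ X : Q(x−a) = ρ(a,X)}`, via its equivalent
description `m(a) = {x ∈ X : ∀ b ∈ X, Q(x−a) ≤ Q(b−a)}`. -/
def mm (l p : ℕ) (X : Set (PE l p)) (a : PE l p) : Set (PE l p) :=
  {x ∈ X | ∀ b ∈ X, Q l p (x - a) ≤ Q l p (b - a)}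

/-- The medial axis `M_X`: points with at least two closest points in `X`. -/
def medialAxis (l p : ℕ) (X : Set (PE l p)) : Set (PE l p) :=
  {a | (mm l p X a).Nontrivial}

/-- The vacant axis `W_X`: points with no closest point in `X`. -/
def vacantAxis (l p : ℕ) (X : Set (PE l p)) : Set (PE l p) :=
  {a | mm l p X a = ∅}

/-- The normal set `N(a) = {x : a ∈ m(x)}`. -/
def NN (l p : ℕ) (X : Set (PE l p)) (a : PE l p) : Set (PE l p) :=
  {x | a ∈ mm l p X x}

/-- The strict normal set `N'(a) = {x : m(x) = {a}}`. -/
def NN' (l p : ℕ) (X : Set (PE l p)) (a : PE l p) : Set (PE l p) :=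
  {x | mm l p X x = {a}}

lemma Q_zero' (l p : ℕ) : Q l p 0 = 0 := by
  simp [Q]

lemma pseudoInner_zero_left (l p : ℕ) (v : PE l p) : pseudoInner l p 0 v = 0 := by
  simp [pseudoInner]

lemma Q_sub_smul (l p : ℕ) (t : ℝ) (u v : PE l p) :
    Q l p (u - t • v) = Q l p u - 2 * t * pseudoInner l p u v + t ^ 2 * Q l p v := by
  unfold Q pseudoInner
  simp only [PiLp.sub_apply, PiLp.smul_apply, smul_eq_mul, Finset.mul_sum,
    ← Finset.sum_sub_distrib, ← Finset.sum_add_distrib]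
  refine Finset.sum_congr rfl fun i _ => ?_
  split <;> ring

/-- For closed acausal `X`, `a ∈ X`, `x ∈ N(a)`, `x ≠ a`: the half-open
segment `[a,x)` lies in `N'(a)`, i.e. `m(a + t(x−a)) = {a}` for all `t ∈ [0,1)`;
in particular if `x ∈ N'(a)` then the closed segment `[a,x]` lies in `N'(a)`. -/
theorem segment_subset_strictNormalSet (l p : ℕ) (hl : 1 ≤ l)
    (X : Set (PE l p)) (hX : IsClosed X) (hac : Acausal l p X)
    (a : PE l p) (ha : a ∈ X) (x : PE l p) (hx : x ∈ NN l p X a) (hxa : x ≠ a) :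
    (∀ t ∈ Set.Ico (0 : ℝ) 1, a + t • (x - a) ∈ NN' l p X a) ∧
    (x ∈ NN' l p X a → ∀ t ∈ Set.Icc (0 : ℝ) 1, a + t • (x - a) ∈ NN' l p X a) := by
  obtain ⟨haX, hmin⟩ := hx
  -- key inequality: 2⟪b−a, x−a⟫ ≤ Q(b−a) for b ∈ X
  have hIB : ∀ b ∈ X, 2 * pseudoInner l p (b - a) (x - a) ≤ Q l p (b - a) := by
    intro b hb
    have h1 : b - x = (b - a) - (1 : ℝ) • (x - a) := by
      rw [one_smul, sub_sub_sub_cancel_right]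
    have h2 : a - x = (0 : PE l p) - (1 : ℝ) • (x - a) := by
      rw [one_smul, zero_sub, neg_sub]
    have hle := hmin b hb
    rw [h1, Q_sub_smul] at hle
    rw [h2, Q_sub_smul, Q_zero', pseudoInner_zero_left] at hle
    nlinarith [hle]
  -- the main claim for t ∈ [0,1)
  have main : ∀ t : ℝ, 0 ≤ t → t < 1 → mm l p X (a + t • (x - a)) = {a} := by
    intro t ht0 ht1
    have hca : a - (a + t • (x - a)) = (0 : PE l p) - t • (x - a) := by
      rw [sub_add_eq_sub_sub, sub_self]
    have hQa : Q l p (a - (a + t • (x - a))) = t ^ 2 * Q l p (x - a) := by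
      rw [hca, Q_sub_smul, Q_zero', pseudoInner_zero_left]; ring
    have hstrict : ∀ b ∈ X, b ≠ a →
        Q l p (a - (a + t • (x - a))) < Q l p (b - (a + t • (x - a))) := by
      intro b hb hba
      have hcb : b - (a + t • (x - a)) = (b - a) - t • (x - a) := by
        rw [sub_add_eq_sub_sub]
      rw [hcb, Q_sub_smul, hQa]
      have hQba : 0 < Q l p (b - a) := hac b hb a ha hba
      nlinarith [mul_le_mul_of_nonneg_left (hIB b hb) ht0]
    ext y
    simp only [Set.mem_singleton_iff]
    constructor
    · rintro ⟨hyX, hy⟩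
      by_contra hya
      exact absurd (hy a ha) (not_le.mpr (hstrict y hyX hya))
    · intro hy
      rw [hy]
      refine ⟨ha, fun b hb => ?_⟩
      rcases eq_or_ne b a with rfl | hba
      · exact le_refl _
      · exact (hstrict b hb hba).le
  refine ⟨fun t ht => main t ht.1 ht.2, fun hx' t ht => ?_⟩
  rcases lt_or_eq_of_le ht.2 with h1 | h1
  · exact main t ht.1 h1
  · have : a + t • (x - a) = x := by
      subst h1; rw [one_smul]; abel
    rw [NN', Set.mem_setOf_eq, this]
    exact hx'
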